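/- For any real number x and any n ≥ 1, ∑_{k=1}^n B_{n,k}(1,1,...,1) evaluated via the weighted sum ∑_{k=1}^n ∑_λ (k!/(λ_1!···λ_n!)) x^k over partition-type vectors λ of n with k parts equals x(1+x)^{n-1}. -/

import Mathlib

open Finset

/-- Partition-type vectors `λ ∈ ℕ^n` with `∑ i·λ_i = n` and `∑ λ_i = k`. -/
def bellIndex (n k : ℕ) : Finset (Fin n → Fin (n + 1)) :=
  univ.filter fun l => (∑ i, (i.1 + 1) * (l i).1 = n) ∧ (∑ i, (l i).1 = k)

/-- The coefficient `n! / (λ_1!⋯λ_n! (1!)^{λ_1}⋯(n!)^{λ_n})`. -/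
def bellCoeff (n : ℕ) (l : Fin n → Fin (n + 1)) : ℚ :=
  (n.factorial : ℚ) /
    ((∏ i, ((l i).1.factorial * ((i.1 + 1).factorial) ^ (l i).1) : ℕ) : ℚ)

open PowerSeries in
private lemma coeffB (n k : ℕ) (hk : 1 ≤ k) (hkn : k ≤ n) :
    PowerSeries.coeff (R := ℚ) n ((∑ i ∈ range n, (PowerSeries.X : ℚ⟦X⟧)^(i+1))^k)
      = (n-1).choose (k-1) := by
  set G : ℚ⟦X⟧ := ∑ i ∈ range n, (PowerSeries.X : ℚ⟦X⟧)^i with hGdef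
  have hXG : (∑ i ∈ range n, (PowerSeries.X : ℚ⟦X⟧)^(i+1))^k = PowerSeries.X ^ k * G ^ k := by
    rw [← mul_pow, hGdef, Finset.mul_sum]
    congr 1
    exact Finset.sum_congr rfl fun i _ => by ring
  have hG1 : G * (1 - PowerSeries.X) = 1 - PowerSeries.X ^ n := by
    have := geom_sum_mul (PowerSeries.X : ℚ⟦X⟧) n
    linear_combination -this
  have hGk : G ^ k = (1 - PowerSeries.X ^ n) ^ k * (invOneSubPow ℚ k).val := by
    have hiv : ((1 - PowerSeries.X : ℚ⟦X⟧) ^ k) * (invOneSubPow ℚ k).val = 1 := by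
      rw [← invOneSubPow_inv_eq_one_sub_pow]
      exact (invOneSubPow ℚ k).inv_val
    calc G ^ k = G ^ k * (((1 - PowerSeries.X) ^ k) * (invOneSubPow ℚ k).val) := by
          rw [hiv, mul_one]
      _ = (G * (1 - PowerSeries.X)) ^ k * (invOneSubPow ℚ k).val := by rw [mul_pow]; ring
      _ = (1 - PowerSeries.X ^ n) ^ k * (invOneSubPow ℚ k).val := by rw [hG1]
  obtain ⟨D, hD⟩ : (PowerSeries.X : ℚ⟦X⟧) ^ n ∣ (1 - PowerSeries.X ^ n) ^ k - 1 := by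
    have h1 : (PowerSeries.X : ℚ⟦X⟧) ^ n ∣ (1 - PowerSeries.X ^ n) - 1 := by
      simp [dvd_neg]
    simpa using h1.trans (sub_dvd_pow_sub_pow (1 - PowerSeries.X ^ n) 1 k)
  have hexp : G ^ k = (invOneSubPow ℚ k).val
      + PowerSeries.X ^ n * (D * (invOneSubPow ℚ k).val) := by
    rw [hGk]
    have : (1 - PowerSeries.X ^ n : ℚ⟦X⟧) ^ k = 1 + PowerSeries.X ^ n * D := by
      linear_combination hD
    rw [this]; ring
  rw [hXG, PowerSeries.coeff_X_pow_mul' _ _ _, if_pos hkn, hexp, map_add]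
  have hz : PowerSeries.coeff (R := ℚ) (n - k)
      (PowerSeries.X ^ n * (D * (invOneSubPow ℚ k).val)) = 0 := by
    rw [PowerSeries.coeff_X_pow_mul' _ _ _, if_neg (by omega)]
  rw [hz, add_zero, invOneSubPow_val_eq_mk_sub_one_add_choose_of_pos _ _ hk,
    PowerSeries.coeff_mk]
  congr 2
  omega

open Fin.NatCast in
open PowerSeries in
private lemma coeffA (n k : ℕ) :
    PowerSeries.coeff (R := ℚ) n ((∑ i ∈ range n, (PowerSeries.X : ℚ⟦X⟧)^(i+1))^k)
      = ∑ l ∈ bellIndex n k, (Nat.multinomial univ (fun i => (l i).1) : ℚ) := by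
  rw [← Fin.sum_univ_eq_sum_range (fun i => (PowerSeries.X : ℚ⟦X⟧)^(i+1)) n,
    Finset.sum_pow_eq_sum_piAntidiag univ (fun i : Fin n => (PowerSeries.X : ℚ⟦X⟧)^(i.1+1)) k,
    map_sum]
  have hterm : ∀ g : Fin n → ℕ,
      PowerSeries.coeff (R := ℚ) n ((Nat.multinomial univ g : ℚ⟦X⟧)
        * ∏ i : Fin n, ((PowerSeries.X : ℚ⟦X⟧)^(i.1+1))^(g i))
      = if ∑ i : Fin n, (i.1+1) * g i = n then (Nat.multinomial univ g : ℚ) else 0 := by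
    intro g
    have : ∏ i : Fin n, ((PowerSeries.X : ℚ⟦X⟧)^(i.1+1))^(g i)
        = PowerSeries.X ^ (∑ i : Fin n, (i.1+1) * g i) := by
      rw [← Finset.prod_pow_eq_pow_sum]
      exact Finset.prod_congr rfl fun i _ => by rw [← pow_mul]
    rw [this, ← nsmul_eq_mul, map_nsmul, PowerSeries.coeff_X_pow]
    by_cases h : ∑ i : Fin n, (i.1+1) * g i = n
    · simp [h]
    · rw [if_neg h, if_neg (fun hh => h hh.symm), smul_zero]
  rw [Finset.sum_congr rfl fun g _ => hterm g, ← Finset.sum_filter]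
  refine Finset.sum_nbij' (fun g => fun i => ((g i : Fin (n+1)))) (fun l => fun i => (l i).1)
    ?_ ?_ ?_ ?_ ?_
  · intro g hg
    simp only [mem_filter, mem_piAntidiag] at hg
    obtain ⟨⟨hsum, -⟩, hn⟩ := hg
    have hle : ∀ i : Fin n, g i ≤ n := by
      intro i
      calc g i ≤ (i.1+1) * g i := Nat.le_mul_of_pos_left _ (Nat.succ_pos _)
        _ ≤ ∑ j : Fin n, (j.1+1) * g j := Finset.single_le_sum (f := fun j : Fin n => (j.1+1) * g j)
            (fun j _ => Nat.zero_le _) (mem_univ i)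
        _ = n := hn
    have hval : ∀ i : Fin n, ((g i : Fin (n+1))).1 = g i := fun i =>
      Fin.val_cast_of_lt (Nat.lt_succ_of_le (hle i))
    simp only [bellIndex, mem_filter, mem_univ, true_and, hval]
    exact ⟨hn, hsum⟩
  · intro l hl
    simp only [bellIndex, mem_filter, mem_univ, true_and] at hl
    simp only [mem_filter, mem_piAntidiag]
    exact ⟨⟨hl.2, fun i _ => mem_univ i⟩, hl.1⟩
  · intro g hg
    simp only [mem_filter, mem_piAntidiag] at hg
    obtain ⟨⟨hsum, -⟩, hn⟩ := hg
    have hle : ∀ i : Fin n, g i ≤ n := by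
      intro i
      calc g i ≤ (i.1+1) * g i := Nat.le_mul_of_pos_left _ (Nat.succ_pos _)
        _ ≤ ∑ j : Fin n, (j.1+1) * g j := Finset.single_le_sum (f := fun j : Fin n => (j.1+1) * g j)
            (fun j _ => Nat.zero_le _) (mem_univ i)
        _ = n := hn
    funext i
    exact Fin.val_cast_of_lt (Nat.lt_succ_of_le (hle i))
  · intro l hl
    funext i
    exact Fin.cast_val_eq_self (l i)
  · intro g hg
    simp only [mem_filter, mem_piAntidiag] at hg
    obtain ⟨⟨hsum, -⟩, hn⟩ := hg
    have hle : ∀ i : Fin n, g i ≤ n := by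
      intro i
      calc g i ≤ (i.1+1) * g i := Nat.le_mul_of_pos_left _ (Nat.succ_pos _)
        _ ≤ ∑ j : Fin n, (j.1+1) * g j := Finset.single_le_sum (f := fun j : Fin n => (j.1+1) * g j)
            (fun j _ => Nat.zero_le _) (mem_univ i)
        _ = n := hn
    congr 2
    funext i
    exact (Fin.val_cast_of_lt (Nat.lt_succ_of_le (hle i))).symm

private lemma key_nat (n k : ℕ) (hk : 1 ≤ k) (hkn : k ≤ n) :
    ∑ l ∈ bellIndex n k, Nat.multinomial univ (fun i => (l i).1)
      = (n-1).choose (k-1) := by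
  have h := (coeffA n k).symm.trans (coeffB n k hk hkn)
  exact_mod_cast h

private lemma key_real (n k : ℕ) (hk : 1 ≤ k) (hkn : k ≤ n) :
    ∑ l ∈ bellIndex n k, ((k.factorial : ℝ) / ((∏ i, ((l i).1.factorial) : ℕ) : ℝ))
      = ((n-1).choose (k-1) : ℝ) := by
  have hterm : ∀ l ∈ bellIndex n k,
      ((k.factorial : ℝ) / ((∏ i, ((l i).1.factorial) : ℕ) : ℝ))
        = (Nat.multinomial univ (fun i => (l i).1) : ℝ) := by
    intro l hl
    simp only [bellIndex, mem_filter, mem_univ, true_and] at hl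
    have hspec := Nat.multinomial_spec (univ : Finset (Fin n)) (fun i => (l i).1)
    rw [hl.2] at hspec
    have hpos : (0 : ℝ) < ((∏ i, ((l i).1.factorial) : ℕ) : ℝ) := by
      exact_mod_cast Nat.pos_of_ne_zero (Finset.prod_ne_zero_iff.2
        fun i _ => Nat.factorial_ne_zero _)
    rw [div_eq_iff (ne_of_gt hpos)]
    rw [mul_comm] at hspec
    exact_mod_cast hspec.symm
  rw [Finset.sum_congr rfl hterm]
  exact_mod_cast congrArg (Nat.cast : ℕ → ℝ) (key_nat n k hk hkn)

/-- `∑_{k=1}^n ∑_λ k!/(λ_1!⋯λ_n!) x^k = x(1+x)^{n-1}`, the sum over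
partition-type vectors λ of n with k parts. -/
theorem sum_partition_weighted (x : ℝ) (n : ℕ) (hn : 1 ≤ n) :
    ∑ k ∈ Icc 1 n, ∑ l ∈ bellIndex n k,
        ((k.factorial : ℝ) / ((∏ i, ((l i).1.factorial) : ℕ) : ℝ)) * x ^ k
      = x * (1 + x) ^ (n - 1) := by
  have hstep : ∀ k ∈ Icc 1 n,
      ∑ l ∈ bellIndex n k, ((k.factorial : ℝ) / ((∏ i, ((l i).1.factorial) : ℕ) : ℝ)) * x ^ k
        = ((n-1).choose (k-1) : ℝ) * x ^ k := by
    intro k hk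
    rw [mem_Icc] at hk
    rw [← Finset.sum_mul, key_real n k hk.1 hk.2]
  rw [Finset.sum_congr rfl hstep]
  rw [show (Icc 1 n) = (range n).image (· + 1) by
    ext a
    simp only [mem_image, mem_range, mem_Icc]
    constructor
    · rintro ⟨h1, h2⟩; exact ⟨a - 1, by omega, by omega⟩
    · rintro ⟨b, hb, rfl⟩; omega]
  rw [Finset.sum_image (by intro a _ b _ h; simp only at h; omega)]
  have h2 : (1 + x) ^ (n - 1) = ∑ i ∈ range n, x ^ i * ((n-1).choose i : ℝ) := by
    rw [add_comm, add_pow, show n - 1 + 1 = n by omega]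
    simp only [one_pow, mul_one]
  rw [h2, Finset.mul_sum]
  refine Finset.sum_congr rfl fun i _ => ?_
  have : i + 1 - 1 = i := by omega
  rw [this]
  ring
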